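/- arXiv:2409.01819 — 2 statements merged into one kernel-verified Lean document; each statement's English description precedes it below -/
import Mathlib

section
/- Let X be an N×n random matrix with i.i.d. entries satisfying P(|x_11| > t) ≤ C_u t^{-α} for t ≥ T_0, with α > 2. Define the set D = {(i,j) : |x_ij| > N^{1/2 - c}} for a constant c ∈ (0,1/2). Then there exist constants c, c' ∈ (0,1/2) depending only on α such that for all sufficiently large n, P(|D| > N^{1-c'}) ≤ N^{-((α-2)/4)·N^{1-c'}}. -/
open MeasureTheory ProbabilityTheory Filter
open scoped ENNReal Nat

lemma choose_le_exp_pow (M k : ℕ) (hk : 1 ≤ k) :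
    (M.choose k : ℝ) ≤ (Real.exp 1 * M / k) ^ k := by
  have hkpos : (0:ℝ) < k := by exact_mod_cast hk
  have hfact : (0:ℝ) < (k ! : ℕ) := by exact_mod_cast k.factorial_pos
  have h1 : (M.choose k : ℝ) ≤ (M:ℝ)^k / (k ! : ℕ) := Nat.choose_le_pow_div k M
  have h2 : ((k:ℝ))^k / (k ! : ℕ) ≤ Real.exp k :=
    Real.pow_div_factorial_le_exp (k:ℝ) (by positivity) k
  have h3 : ((k:ℝ))^k ≤ Real.exp k * (k ! : ℕ) := by
    rw [div_le_iff₀ hfact] at h2; linarith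
  have h4 : (Real.exp 1 * M / k)^k = Real.exp k * (M:ℝ)^k / ((k:ℝ))^k := by
    rw [div_pow, mul_pow, Real.exp_one_pow]
  rw [h4]
  refine h1.trans ?_
  rw [div_le_div_iff₀ hfact (by positivity : (0:ℝ) < ((k:ℝ))^k)]
  calc (M:ℝ)^k * (k:ℝ)^k ≤ (M:ℝ)^k * (Real.exp k * (k ! : ℕ)) := by
        apply mul_le_mul_of_nonneg_left h3 (by positivity)
    _ = Real.exp k * (M:ℝ)^k * (k ! : ℕ) := by ring

set_option maxHeartbeats 1000000 in
/-- Proposition 4.1: for an `N×n` matrix with i.i.d. entries having tail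
`P(|x₁₁| > t) ≤ C_u t^{-α}` (`t ≥ T₀`) with `α > 2` and `N = ⌈a·n⌉`, there are constants
`c, c' ∈ (0,1/2)` depending only on `α` such that for large `n`, the number of entries
exceeding `N^{1/2-c}` is at most `N^{1-c'}` except with probability
`N^{-((α-2)/4)·N^{1-c'}}`. -/
theorem few_large_entries
    (α Cu T₀ a : ℝ) (hα : 2 < α) (hCu : 0 < Cu) (hT₀ : 0 < T₀) (ha : 1 < a) :
    ∃ c ∈ Set.Ioo (0 : ℝ) (1/2), ∃ c' ∈ Set.Ioo (0 : ℝ) (1/2), ∃ n₀ : ℕ,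
      ∀ n : ℕ, n₀ ≤ n →
      ∀ (Ω : Type) (_ : MeasurableSpace Ω) (μ : Measure Ω), IsProbabilityMeasure μ →
      ∀ x : Fin ⌈a * n⌉₊ → Fin n → Ω → ℝ,
        (∀ i j, Measurable (x i j)) →
        iIndepFun
          (fun p : Fin ⌈a * n⌉₊ × Fin n => x p.1 p.2) μ →
        (∀ i j i' j', IdentDistrib (x i j) (x i' j') μ μ) →
        (∀ i j, ∀ t : ℝ, T₀ ≤ t →
          μ {ω | t < |x i j ω|} ≤ ENNReal.ofReal (Cu * t ^ (-α))) →
        μ {ω | ((⌈a * n⌉₊ : ℝ)) ^ (1 - c') <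
            (Nat.card {p : Fin ⌈a * n⌉₊ × Fin n //
              ((⌈a * n⌉₊ : ℝ)) ^ ((1 : ℝ)/2 - c) < |x p.1 p.2 ω|} : ℝ)}
          ≤ ENNReal.ofReal
              (((⌈a * n⌉₊ : ℝ)) ^ (-((α - 2)/4) * ((⌈a * n⌉₊ : ℝ)) ^ (1 - c'))) := by
  classical
  have hα0 : 0 < α := by linarith
  set c : ℝ := (α - 2) / (32 * α) with hc_def
  have hc0 : 0 < c := div_pos (by linarith) (by linarith)
  have hcα : α * c = (α - 2) / 32 := by
    rw [hc_def, mul_div_assoc', mul_comm 32 α, mul_div_mul_left _ _ hα0.ne']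
  have hc32 : c ≤ (α - 2) / 32 := by
    rw [hc_def]
    apply div_le_div_of_nonneg_left (by linarith) (by linarith)
    nlinarith
  have hchalf : c < 1/2 := by
    have : (α - 2) / 32 < 1/2 * α := by nlinarith
    nlinarith [hc32]
  refine ⟨c, ⟨hc0, hchalf⟩, c, ⟨hc0, hchalf⟩, ?_⟩
  set β : ℝ := (α - 2) / 4 with hβ_def
  have hβ0 : 0 < β := by rw [hβ_def]; linarith
  set γ : ℝ := 2 - (1 - c) + ((1:ℝ)/2 - c) * (-α) with hγ_def
  set δ : ℝ := -β - γ with hδ_def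
  have hδ0 : 0 < δ := by
    have hδeq : δ = (α - 2)/4 - α * c - c := by rw [hδ_def, hγ_def, hβ_def]; ring
    rw [hδeq, hcα]
    nlinarith [hc32]
  -- eventual conditions
  have hNn : ∀ n : ℕ, (n : ℝ) ≤ ((⌈a * n⌉₊ : ℕ) : ℝ) := by
    intro n
    have h1 : (n:ℝ) ≤ a * n := by nlinarith [(Nat.cast_nonneg n : (0:ℝ) ≤ n)]
    exact h1.trans (Nat.le_ceil _)
  have htend : Tendsto (fun n : ℕ => ((⌈a * n⌉₊ : ℕ) : ℝ)) atTop atTop :=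
    tendsto_atTop_mono hNn tendsto_natCast_atTop_atTop
  have hev : ∀ᶠ n : ℕ in atTop,
      (T₀ ≤ ((⌈a * n⌉₊ : ℕ) : ℝ) ^ ((1:ℝ)/2 - c)
      ∧ Real.exp 1 * Cu ≤ ((⌈a * n⌉₊ : ℕ) : ℝ) ^ δ)
      ∧ (1:ℝ) ≤ ((⌈a * n⌉₊ : ℕ) : ℝ) := by
    refine (Filter.Eventually.and ?_ ?_).and ?_
    · exact ((tendsto_rpow_atTop (by linarith)).comp htend).eventually_ge_atTop T₀
    · exact ((tendsto_rpow_atTop hδ0).comp htend).eventually_ge_atTop _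
    · exact htend.eventually_ge_atTop 1
  obtain ⟨n₀, hn₀⟩ := eventually_atTop.1 hev
  refine ⟨n₀, ?_⟩
  intro n hn Ω _ μ hμ x hmeas hindep hident htail
  obtain ⟨⟨hT, hEC⟩, hNr1⟩ := hn₀ n hn
  set Nr : ℝ := ((⌈a * n⌉₊ : ℕ) : ℝ) with hNr_def
  have hNr0 : (0:ℝ) < Nr := lt_of_lt_of_le one_pos hNr1
  set s : ℝ := (1:ℝ)/2 - c with hs_def
  set thr : ℝ := Nr ^ s with hthr_def
  set v : ℝ := Nr ^ ((1:ℝ) - c) with hv_def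
  have hv0 : 0 < v := Real.rpow_pos_of_pos hNr0 _
  set k : ℕ := ⌊v⌋₊ + 1 with hk_def
  have hk1 : 1 ≤ k := Nat.le_add_left 1 _
  have hkv : v ≤ (k : ℝ) := by
    have := Nat.lt_floor_add_one v
    push_cast [hk_def]
    linarith
  have hkpos : (0:ℝ) < (k:ℝ) := lt_of_lt_of_le hv0 hkv
  set q0 : ℝ := Cu * thr ^ (-α) with hq0_def
  have hq0 : 0 ≤ q0 := by
    apply mul_nonneg hCu.le (Real.rpow_nonneg (Real.rpow_nonneg hNr0.le _) _)
  set A : (Fin ⌈a * n⌉₊ × Fin n) → Set Ω := fun p => {ω | thr < |x p.1 p.2 ω|} with hA_def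
  -- subset step
  have hsub : {ω | v < (Nat.card {p : Fin ⌈a * n⌉₊ × Fin n // thr < |x p.1 p.2 ω|} : ℝ)}
      ⊆ ⋃ S ∈ Finset.powersetCard k (Finset.univ : Finset (Fin ⌈a * n⌉₊ × Fin n)),
          ⋂ p ∈ S, A p := by
    intro ω hω
    set D : Finset (Fin ⌈a * n⌉₊ × Fin n) :=
      Finset.univ.filter (fun p => thr < |x p.1 p.2 ω|) with hD_def
    have hcard : Nat.card {p : Fin ⌈a * n⌉₊ × Fin n // thr < |x p.1 p.2 ω|} = D.card := by
      rw [Nat.card_eq_fintype_card]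
      rw [Fintype.card_subtype]
    have hkD : k ≤ D.card := by
      have h1 : v < (D.card : ℝ) := by
        have hω' : v < (Nat.card {p : Fin ⌈a * n⌉₊ × Fin n // thr < |x p.1 p.2 ω|} : ℝ) := hω
        rwa [hcard] at hω'
      have := (Nat.floor_lt hv0.le).2 h1
      omega
    obtain ⟨S, hSD, hScard⟩ := Finset.exists_subset_card_eq hkD
    have hS1 : S ∈ Finset.powersetCard k (Finset.univ : Finset (Fin ⌈a * n⌉₊ × Fin n)) :=
      Finset.mem_powersetCard.2 ⟨Finset.subset_univ _, hScard⟩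
    have hS2 : ω ∈ ⋂ p ∈ S, A p := by
      refine Set.mem_iInter₂.2 fun p hp => ?_
      have hpD := hSD hp
      rw [hD_def, Finset.mem_filter] at hpD
      exact hpD.2
    exact Set.mem_biUnion hS1 hS2
  -- measure computation
  have hAm : ∀ p : Fin ⌈a * n⌉₊ × Fin n,
      MeasurableSet[MeasurableSpace.comap ((fun p : Fin ⌈a * n⌉₊ × Fin n => x p.1 p.2) p) inferInstance] (A p) := by
    intro p
    exact ⟨{t : ℝ | thr < |t|}, measurableSet_lt measurable_const measurable_abs, rfl⟩
  have hmeasure : ∀ S : Finset (Fin ⌈a * n⌉₊ × Fin n), S ∈ Finset.powersetCard k Finset.univ →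
      μ (⋂ p ∈ S, A p) ≤ ENNReal.ofReal q0 ^ k := by
    intro S hS
    have hSc : S.card = k := (Finset.mem_powersetCard.1 hS).2
    rw [hindep.meas_biInter (fun p _ => hAm p)]
    calc ∏ p ∈ S, μ (A p) ≤ ∏ p ∈ S, ENNReal.ofReal q0 := by
          refine Finset.prod_le_prod' fun p _ => ?_
          exact htail p.1 p.2 thr hT
      _ = ENNReal.ofReal q0 ^ k := by rw [Finset.prod_const, hSc]
  have hstep : μ {ω | v < (Nat.card {p : Fin ⌈a * n⌉₊ × Fin n // thr < |x p.1 p.2 ω|} : ℝ)}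
      ≤ ((⌈a * n⌉₊ * n).choose k : ℝ≥0∞) * ENNReal.ofReal q0 ^ k := by
    calc μ {ω | v < (Nat.card {p : Fin ⌈a * n⌉₊ × Fin n // thr < |x p.1 p.2 ω|} : ℝ)}
        ≤ μ (⋃ S ∈ Finset.powersetCard k (Finset.univ : Finset (Fin ⌈a * n⌉₊ × Fin n)),
            ⋂ p ∈ S, A p) := measure_mono hsub
      _ ≤ ∑ S ∈ Finset.powersetCard k (Finset.univ : Finset (Fin ⌈a * n⌉₊ × Fin n)),
            μ (⋂ p ∈ S, A p) := measure_biUnion_finset_le _ _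
      _ ≤ ∑ S ∈ Finset.powersetCard k (Finset.univ : Finset (Fin ⌈a * n⌉₊ × Fin n)),
            ENNReal.ofReal q0 ^ k := Finset.sum_le_sum hmeasure
      _ = ((⌈a * n⌉₊ * n).choose k : ℝ≥0∞) * ENNReal.ofReal q0 ^ k := by
          rw [Finset.sum_const, Finset.card_powersetCard, Finset.card_univ,
            Fintype.card_prod, Fintype.card_fin, Fintype.card_fin, nsmul_eq_mul]
  -- real inequality
  have hq0eq : q0 = Cu * Nr ^ (s * (-α)) := by
    rw [hq0_def, hthr_def, Real.rpow_mul hNr0.le]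
  have hXk : (((⌈a * n⌉₊ * n : ℕ)) : ℝ) / k ≤ Nr ^ (2:ℝ) / v := by
    have h2 : Nr ^ (2:ℝ) = Nr * Nr := by
      rw [show (2:ℝ) = ((2:ℕ):ℝ) by norm_num, Real.rpow_natCast]; ring
    have hX : (((⌈a * n⌉₊ * n : ℕ)) : ℝ) ≤ Nr ^ (2:ℝ) := by
      rw [h2]
      push_cast
      have := hNn n
      have hn' : (n:ℝ) ≤ Nr := this
      have h0n : (0:ℝ) ≤ n := Nat.cast_nonneg n
      nlinarith
    exact div_le_div₀ (by positivity) hX hv0 hkv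
  have hkey : Real.exp 1 * ((⌈a * n⌉₊ * n : ℕ) : ℝ) / k * q0 ≤ Nr ^ (-β) := by
    have e1 : Real.exp 1 * ((⌈a * n⌉₊ * n : ℕ) : ℝ) / k * q0
        = (Real.exp 1 * Cu) * ((((⌈a * n⌉₊ * n : ℕ)) : ℝ) / k * Nr ^ (s * (-α))) := by
      rw [hq0eq]; ring
    rw [e1]
    have e2 : Nr ^ (2:ℝ) / v * Nr ^ (s * (-α)) = Nr ^ γ := by
      rw [hv_def, ← Real.rpow_sub hNr0, ← Real.rpow_add hNr0, hγ_def, hs_def]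
    calc (Real.exp 1 * Cu) * ((((⌈a * n⌉₊ * n : ℕ)) : ℝ) / k * Nr ^ (s * (-α)))
        ≤ (Real.exp 1 * Cu) * (Nr ^ (2:ℝ) / v * Nr ^ (s * (-α))) := by
          apply mul_le_mul_of_nonneg_left _ (by positivity)
          exact mul_le_mul_of_nonneg_right hXk (Real.rpow_nonneg hNr0.le _)
      _ = (Real.exp 1 * Cu) * Nr ^ γ := by rw [e2]
      _ ≤ Nr ^ δ * Nr ^ γ := by
          apply mul_le_mul_of_nonneg_right hEC (Real.rpow_nonneg hNr0.le _)
      _ = Nr ^ (-β) := by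
          rw [← Real.rpow_add hNr0]
          congr 1
          rw [hδ_def]; ring
  have hreal : (((⌈a * n⌉₊ * n).choose k : ℕ) : ℝ) * q0 ^ k ≤ Nr ^ (-β * v) := by
    calc (((⌈a * n⌉₊ * n).choose k : ℕ) : ℝ) * q0 ^ k
        ≤ (Real.exp 1 * ((⌈a * n⌉₊ * n : ℕ) : ℝ) / k) ^ k * q0 ^ k := by
          apply mul_le_mul_of_nonneg_right (choose_le_exp_pow _ _ hk1) (by positivity)
      _ = (Real.exp 1 * ((⌈a * n⌉₊ * n : ℕ) : ℝ) / k * q0) ^ k := (mul_pow _ _ _).symm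
      _ ≤ (Nr ^ (-β)) ^ k := by
          apply pow_le_pow_left₀ (by positivity) hkey
      _ = Nr ^ (-β * (k:ℝ)) := by
          rw [← Real.rpow_natCast (Nr ^ (-β)) k, ← Real.rpow_mul hNr0.le]
      _ ≤ Nr ^ (-β * v) := by
          exact Real.rpow_le_rpow_of_exponent_le hNr1
            (mul_le_mul_of_nonpos_left hkv (by linarith))
  -- conclude
  refine hstep.trans ?_
  rw [← ENNReal.ofReal_pow hq0, ← ENNReal.ofReal_natCast, ← ENNReal.ofReal_mul (by positivity)]
  exact ENNReal.ofReal_le_ofReal hreal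
end

section
/- Let x₁, ..., x_n be i.i.d. bounded random variables with |x_j| ≤ M, mean zero, and E[x_j²] ≤ p where p = N^{-1+αε} for parameters α, ε > 0 and n ≤ N ≤ a·n. Then for any q ≥ 2, E[(Σ_{j=1}^n x_j²)^{q/2}] ≤ C^q·((N^{αε})^{q/2} + q^{q/2}·N + q^{q/4}·(N^{αε})^{q/4}) for a constant C depending on M and a, but not on q or N. -/
open MeasureTheory ProbabilityTheory

lemma integrable_of_bdd {Ω : Type} [MeasurableSpace Ω] {μ : Measure Ω} [IsFiniteMeasure μ]
    {f : Ω → ℝ} (hf : Measurable f) {K : ℝ} (h : ∀ ω, |f ω| ≤ K) : Integrable f μ :=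
  Integrable.mono' (integrable_const K) hf.aestronglyMeasurable (Filter.Eventually.of_forall h)

lemma moment_pow_bound {Ω : Type} [MeasurableSpace Ω] (μ : Measure Ω) [IsProbabilityMeasure μ]
    {n : ℕ} (y : Fin n → Ω → ℝ) (hmeas : ∀ j, Measurable (y j))
    (hindep : iIndepFun y μ)
    {B : ℝ} (hB : 0 ≤ B) (hy0 : ∀ j ω, 0 ≤ y j ω) (hyB : ∀ j ω, y j ω ≤ B) :
    ∀ (k : ℕ) (c : ℝ), 0 ≤ c →
      ∫ ω, (∑ j, y j ω + c) ^ k ∂μ ≤ ((∑ j, ∫ ω, y j ω ∂μ) + c + k * B) ^ k := by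
  have hSmeas : Measurable fun ω => ∑ j, y j ω := Finset.measurable_sum _ fun j _ => hmeas j
  have hS0 : ∀ ω, 0 ≤ ∑ j, y j ω := fun ω => Finset.sum_nonneg fun j _ => hy0 j ω
  have hSB : ∀ ω, ∑ j, y j ω ≤ n * B := by
    intro ω
    calc ∑ j, y j ω ≤ ∑ _j : Fin n, B := Finset.sum_le_sum fun j _ => hyB j ω
    _ = n * B := by simp [mul_comm]
  have hnB : (0:ℝ) ≤ n * B := by positivity
  have hm0 : 0 ≤ ∑ j, ∫ ω, y j ω ∂μ :=
    Finset.sum_nonneg fun j _ => integral_nonneg (hy0 j)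
  intro k
  induction k with
  | zero => intro c hc; simp
  | succ k ih =>
    intro c hc
    set m := ∑ j, ∫ ω, y j ω ∂μ with hm
    set D := m + c + (k + 1 : ℕ) * B with hD
    have hkB : (0:ℝ) ≤ (k+1 : ℕ) * B := by positivity
    have hk0 : (0:ℝ) ≤ (k : ℕ) * B := by positivity
    have hD0 : 0 ≤ D := by simp only [hD]; linarith
    -- integrability of powers
    have hint : ∀ (g : Ω → ℝ), Measurable g → (∀ ω, 0 ≤ g ω) → (∀ ω, g ω ≤ n * B) →
        ∀ (c' : ℝ), 0 ≤ c' → Integrable (fun ω => (g ω + c') ^ k) μ := by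
      intro g hg h0 hb c' hc'
      refine integrable_of_bdd (by fun_prop) (K := (n * B + c') ^ k) fun ω => ?_
      rw [abs_of_nonneg (pow_nonneg (by linarith [h0 ω]) k)]
      exact pow_le_pow_left₀ (by linarith [h0 ω]) (by linarith [hb ω]) k
    -- per-index bound
    have key : ∀ j : Fin n, ∫ ω, y j ω * (∑ i, y i ω + c) ^ k ∂μ ≤ (∫ ω, y j ω ∂μ) * D ^ k := by
      intro j
      set T := fun ω => ∑ i ∈ Finset.univ.erase j, y i ω with hT
      have hTmeas : Measurable T := Finset.measurable_sum _ fun i _ => hmeas i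
      have hT0 : ∀ ω, 0 ≤ T ω := fun ω => Finset.sum_nonneg fun i _ => hy0 i ω
      have hTS : ∀ ω, T ω + y j ω = ∑ i, y i ω := fun ω =>
        Finset.sum_erase_add Finset.univ _ (Finset.mem_univ j)
      have hTleS : ∀ ω, T ω ≤ ∑ i, y i ω := by
        intro ω; rw [← hTS ω]; linarith [hy0 j ω]
      have hTB : ∀ ω, T ω ≤ n * B := fun ω => le_trans (hTleS ω) (hSB ω)
      -- pointwise bound
      have step1 : ∫ ω, y j ω * (∑ i, y i ω + c) ^ k ∂μ
          ≤ ∫ ω, y j ω * (T ω + (c + B)) ^ k ∂μ := by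
        refine integral_mono ?_ ?_ ?_
        · refine integrable_of_bdd (by fun_prop) (K := B * (n * B + c) ^ k) fun ω => ?_
          rw [abs_of_nonneg (mul_nonneg (hy0 j ω) (pow_nonneg (by linarith [hS0 ω]) k))]
          exact mul_le_mul (hyB j ω)
            (pow_le_pow_left₀ (by linarith [hS0 ω]) (by linarith [hSB ω]) k)
            (pow_nonneg (by linarith [hS0 ω]) k) hB
        · refine integrable_of_bdd (by fun_prop) (K := B * (n * B + (c + B)) ^ k) fun ω => ?_
          rw [abs_of_nonneg (mul_nonneg (hy0 j ω) (pow_nonneg (by linarith [hT0 ω]) k))]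
          exact mul_le_mul (hyB j ω)
            (pow_le_pow_left₀ (by linarith [hT0 ω]) (by linarith [hTB ω]) k)
            (pow_nonneg (by linarith [hT0 ω]) k) hB
        · intro ω
          refine mul_le_mul_of_nonneg_left ?_ (hy0 j ω)
          refine pow_le_pow_left₀ (by linarith [hS0 ω]) ?_ k
          have h1 := hTS ω
          have h2 := hyB j ω
          linarith
      -- independence
      have hInd : IndepFun (y j) (fun ω => (T ω + (c + B)) ^ k) μ := by
        have h1 : IndepFun (∑ i ∈ Finset.univ.erase j, y i) (y j) μ :=
          hindep.indepFun_finsetSum_of_notMem hmeas (Finset.notMem_erase j Finset.univ)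
        have h2 := h1.symm.comp measurable_id
          ((measurable_id.add_const (c + B)).pow_const k)
        have he : (fun ω => (T ω + (c + B)) ^ k)
            = (fun t => (t + (c + B)) ^ k) ∘ (∑ i ∈ Finset.univ.erase j, y i) := by
          funext ω; simp [hT, Finset.sum_apply]
        rw [he]
        exact h2
      have step2 : ∫ ω, y j ω * (T ω + (c + B)) ^ k ∂μ
          = (∫ ω, y j ω ∂μ) * ∫ ω, (T ω + (c + B)) ^ k ∂μ := by
        refine hInd.integral_fun_mul_eq_mul_integral ?_ ?_
        · exact (integrable_of_bdd (hmeas j) (K := B) fun ω =>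
            abs_le.2 ⟨by linarith [hy0 j ω], hyB j ω⟩).aestronglyMeasurable
        · exact (hint T hTmeas hT0 hTB (c + B) (by linarith)).aestronglyMeasurable
      have step3 : ∫ ω, (T ω + (c + B)) ^ k ∂μ ≤ ∫ ω, (∑ i, y i ω + (c + B)) ^ k ∂μ := by
        refine integral_mono (hint T hTmeas hT0 hTB (c+B) (by linarith))
          (hint _ hSmeas hS0 hSB (c+B) (by linarith)) fun ω => ?_
        exact pow_le_pow_left₀ (by linarith [hT0 ω]) (by linarith [hTleS ω]) k
      have step4 : ∫ ω, (∑ i, y i ω + (c + B)) ^ k ∂μ ≤ D ^ k := by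
        refine le_trans (ih (c + B) (by linarith)) (pow_le_pow_left₀ (by linarith) ?_ k)
        simp only [hD]
        push_cast
        nlinarith
      calc ∫ ω, y j ω * (∑ i, y i ω + c) ^ k ∂μ
          ≤ (∫ ω, y j ω ∂μ) * ∫ ω, (T ω + (c + B)) ^ k ∂μ := by rw [← step2]; exact step1
        _ ≤ (∫ ω, y j ω ∂μ) * D ^ k :=
            mul_le_mul_of_nonneg_left (le_trans step3 step4) (integral_nonneg (hy0 j))
    -- expand (S+c)^{k+1}
    have expand : ∀ ω, (∑ j, y j ω + c) ^ (k+1)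
        = c * (∑ j, y j ω + c) ^ k + ∑ j, y j ω * (∑ i, y i ω + c) ^ k := by
      intro ω
      rw [pow_succ, ← Finset.sum_mul]
      ring
    have hintS := hint _ hSmeas hS0 hSB c hc
    have hintj : ∀ j : Fin n, Integrable (fun ω => y j ω * (∑ i, y i ω + c) ^ k) μ := by
      intro j
      refine integrable_of_bdd (by fun_prop) (K := B * (n * B + c) ^ k) fun ω => ?_
      rw [abs_of_nonneg (mul_nonneg (hy0 j ω) (pow_nonneg (by linarith [hS0 ω]) k))]
      exact mul_le_mul (hyB j ω)
        (pow_le_pow_left₀ (by linarith [hS0 ω]) (by linarith [hSB ω]) k)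
        (pow_nonneg (by linarith [hS0 ω]) k) hB
    have hIHc : ∫ ω, (∑ j, y j ω + c) ^ k ∂μ ≤ D ^ k := by
      refine le_trans (ih c hc) (pow_le_pow_left₀ (by linarith) ?_ k)
      simp only [hD]; push_cast; nlinarith
    calc ∫ ω, (∑ j, y j ω + c) ^ (k+1) ∂μ
        = c * (∫ ω, (∑ j, y j ω + c) ^ k ∂μ)
            + ∑ j, ∫ ω, y j ω * (∑ i, y i ω + c) ^ k ∂μ := by
          simp_rw [expand]
          rw [integral_add (hintS.const_mul c) (integrable_finset_sum _ fun j _ => hintj j),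
            integral_const_mul, integral_finset_sum _ fun j _ => hintj j]
      _ ≤ c * D ^ k + ∑ j, (∫ ω, y j ω ∂μ) * D ^ k :=
          add_le_add (mul_le_mul_of_nonneg_left hIHc hc)
            (Finset.sum_le_sum fun j _ => key j)
      _ = (c + m) * D ^ k := by rw [← Finset.sum_mul, hm]; ring
      _ ≤ D * D ^ k := by
          refine mul_le_mul_of_nonneg_right ?_ (pow_nonneg hD0 k)
          simp only [hD]; linarith
      _ = D ^ (k+1) := by rw [pow_succ]; ring


lemma jensen_rpow {Ω : Type} [MeasurableSpace Ω] (μ : Measure Ω) [IsProbabilityMeasure μ]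
    {Y : Ω → ℝ} (hY : Measurable Y) {K : ℝ} (h1 : ∀ ω, 1 ≤ Y ω) (hK : ∀ ω, Y ω ≤ K)
    {θ : ℝ} (hθ0 : 0 < θ) (hθ1 : θ ≤ 1) :
    ∫ ω, (Y ω) ^ θ ∂μ ≤ (∫ ω, Y ω ∂μ) ^ θ := by
  have hYint : Integrable Y μ := integrable_of_bdd hY fun ω =>
    abs_le.2 ⟨by linarith [h1 ω, hK ω], hK ω⟩
  set A := ∫ ω, Y ω ∂μ with hA
  have hA1 : 1 ≤ A := by
    have : ∫ (_ : Ω), (1:ℝ) ∂μ ≤ A := integral_mono (integrable_const 1) hYint h1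
    simpa using this
  have hA0 : 0 < A := by linarith
  -- pointwise tangent-line bound
  have hpt : ∀ ω, (Y ω) ^ θ ≤ θ * (A ^ (θ - 1)) * Y ω + (1 - θ) * A ^ θ := by
    intro ω
    have hY0 : 0 ≤ Y ω := by linarith [h1 ω]
    have h := Real.geom_mean_le_arith_mean2_weighted hθ0.le (by linarith : (0:ℝ) ≤ 1 - θ)
      (div_nonneg hY0 hA0.le) zero_le_one (by ring)
    rw [Real.one_rpow, mul_one, mul_one, Real.div_rpow hY0 hA0.le] at h
    -- h : Y^θ / A^θ ≤ θ * (Y/A) + (1-θ)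
    have hAθ : 0 < A ^ θ := Real.rpow_pos_of_pos hA0 θ
    have h2 := mul_le_mul_of_nonneg_right h hAθ.le
    rw [div_mul_cancel₀ _ (ne_of_gt hAθ)] at h2
    have e : A ^ (θ - 1) = A ^ θ / A := by
      rw [Real.rpow_sub hA0, Real.rpow_one]
    calc (Y ω) ^ θ ≤ (θ * (Y ω / A) + (1 - θ)) * A ^ θ := h2
      _ = θ * (A ^ (θ - 1)) * Y ω + (1 - θ) * A ^ θ := by
          rw [e]; field_simp
  have hintL : Integrable (fun ω => (Y ω) ^ θ) μ := by
    refine integrable_of_bdd ((Real.continuous_rpow_const hθ0.le).measurable.comp hY) (K := K ^ θ) fun ω => ?_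
    rw [abs_of_nonneg (Real.rpow_nonneg (by linarith [h1 ω]) θ)]
    exact Real.rpow_le_rpow (by linarith [h1 ω]) (hK ω) hθ0.le
  calc ∫ ω, (Y ω) ^ θ ∂μ
      ≤ ∫ ω, (θ * (A ^ (θ - 1)) * Y ω + (1 - θ) * A ^ θ) ∂μ := by
        refine integral_mono hintL ?_ hpt
        exact ((hYint.const_mul _).add (integrable_const _))
    _ = θ * (A ^ (θ - 1)) * A + (1 - θ) * A ^ θ := by
        rw [integral_add ((hYint.const_mul _)) (integrable_const _), integral_const_mul,
          integral_const]
        simp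
        exact Or.inl rfl
    _ = A ^ θ := by
        have e : A ^ (θ - 1) * A = A ^ θ := by
          rw [Real.rpow_sub hA0, Real.rpow_one, div_mul_cancel₀ _ (ne_of_gt hA0)]
        calc θ * (A ^ (θ - 1)) * A + (1 - θ) * A ^ θ
            = θ * (A ^ (θ - 1) * A) + (1 - θ) * A ^ θ := by ring
          _ = A ^ θ := by rw [e]; ring
    _ = (∫ ω, Y ω ∂μ) ^ θ := rfl


lemma add_rpow_le {a b r : ℝ} (ha : 0 ≤ a) (hb : 0 ≤ b) (hr : 0 ≤ r) :
    (a + b) ^ r ≤ 2 ^ r * (a ^ r + b ^ r) := by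
  have hmax : a + b ≤ 2 * max a b := by
    rcases le_total a b with h | h
    · simp [max_eq_right h]; linarith
    · simp [max_eq_left h]; linarith
  calc (a + b) ^ r ≤ (2 * max a b) ^ r :=
        Real.rpow_le_rpow (by linarith) hmax hr
    _ = 2 ^ r * (max a b) ^ r := Real.mul_rpow (by norm_num) (le_max_iff.2 (Or.inl ha))
    _ ≤ 2 ^ r * (a ^ r + b ^ r) := by
        refine mul_le_mul_of_nonneg_left ?_ (Real.rpow_nonneg (by norm_num) r)
        rcases le_total a b with h | h
        · rw [max_eq_right h]
          have := Real.rpow_nonneg ha r; linarith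
        · rw [max_eq_left h]
          have := Real.rpow_nonneg hb r; linarith

/-- Row-norm moment estimate: for each `M > 0` and aspect ratio `a ≥ 1` there is a
constant `C > 0` such that, whenever `x₁, …, x_n` are independent, mean-zero random
variables bounded by `M` with `E[x_j²] ≤ p = N^{-1+αε}` and `n ≤ N ≤ a·n`, then for every
`q ≥ 2`,
`E[(Σ_j x_j²)^{q/2}] ≤ C^q·((N^{αε})^{q/2} + q^{q/2}·N + q^{q/4}·(N^{αε})^{q/4})`. -/
theorem row_norm_moment_bound (M a : ℝ) (hM : 0 < M) (ha : 1 ≤ a) :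
    ∃ C : ℝ, 0 < C ∧
      ∀ (α ε : ℝ), 0 < α → 0 < ε →
      ∀ (N n : ℕ), 0 < n → n ≤ N → (N : ℝ) ≤ a * n →
      ∀ {Ω : Type} [MeasurableSpace Ω] (μ : Measure Ω), IsProbabilityMeasure μ →
      ∀ x : Fin n → Ω → ℝ, (∀ j, Measurable (x j)) →
        iIndepFun x μ →
        (∀ j ω, |x j ω| ≤ M) →
        (∀ j, ∫ ω, x j ω ∂μ = 0) →
        (∀ j, ∫ ω, (x j ω) ^ 2 ∂μ ≤ (N : ℝ) ^ (-1 + α * ε)) →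
      ∀ q : ℝ, 2 ≤ q →
        ∫ ω, (∑ j, (x j ω) ^ 2) ^ (q / 2) ∂μ
          ≤ C ^ q * (((N : ℝ) ^ (α * ε)) ^ (q / 2) + q ^ (q / 2) * N
              + q ^ (q / 4) * ((N : ℝ) ^ (α * ε)) ^ (q / 4)) := by
  refine ⟨2 * (M ^ 2 + 2), by positivity, ?_⟩
  intro α ε hα hε N n hn hnN hNa Ω _ μ hμ x hxm hxi hxM _ hxvar q hq
  haveI := hμ
  set C := 2 * (M ^ 2 + 2) with hC
  have hC1 : (1:ℝ) ≤ C := by nlinarith [sq_nonneg M]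
  have hNn : 0 < N := lt_of_lt_of_le hn hnN
  have hN0 : (0:ℝ) < N := by exact_mod_cast hNn
  have hN1 : (1:ℝ) ≤ N := by exact_mod_cast hNn
  have hnN' : (n:ℝ) ≤ N := by exact_mod_cast hnN
  have hq0 : (0:ℝ) < q := by linarith
  set P := (N:ℝ) ^ (α * ε) with hP
  have hP1 : 1 ≤ P := Real.one_le_rpow hN1 (by positivity)
  have hP0 : 0 < P := by linarith
  -- squared variables
  have hy0 : ∀ (j : Fin n) ω, 0 ≤ (x j ω) ^ 2 := fun j ω => sq_nonneg _
  have hyB : ∀ (j : Fin n) ω, (x j ω) ^ 2 ≤ M ^ 2 := fun j ω =>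
    sq_le_sq' (abs_le.1 (hxM j ω)).1 (abs_le.1 (hxM j ω)).2
  have hymeas : ∀ j : Fin n, Measurable fun ω => (x j ω) ^ 2 := fun j => by fun_prop
  have hyindep : iIndepFun (fun j ω => (x j ω) ^ 2) μ := by
    have h := hxi.comp (fun _ => fun t : ℝ => t ^ 2) fun _ => by fun_prop
    exact h
  -- ceiling exponent
  set k := ⌈q / 2⌉₊ with hk
  have hk1 : 1 ≤ k := Nat.one_le_ceil_iff.2 (by linarith)
  have hk0 : (0:ℝ) < k := by exact_mod_cast hk1
  have hkq2 : q / 2 ≤ (k:ℝ) := Nat.le_ceil _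
  have hkq : (k:ℝ) ≤ q := by
    have h := Nat.ceil_lt_add_one (show (0:ℝ) ≤ q / 2 by linarith)
    rw [← hk] at h
    linarith
  set θ := q / (2 * k) with hθ
  have hθ0 : 0 < θ := by positivity
  have hθ1 : θ ≤ 1 := by
    rw [hθ, div_le_one (by positivity)]
    linarith
  have hkθ : (k:ℝ) * θ = q / 2 := by
    rw [hθ]; field_simp
  -- the sum
  set S := fun ω => ∑ j, (x j ω) ^ 2 with hS
  have hSmeas : Measurable S := Finset.measurable_sum _ fun j _ => hymeas j
  have hS0 : ∀ ω, 0 ≤ S ω := fun ω => Finset.sum_nonneg fun j _ => hy0 j ω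
  have hSB : ∀ ω, S ω ≤ n * M ^ 2 := by
    intro ω
    calc S ω ≤ ∑ _j : Fin n, M ^ 2 := Finset.sum_le_sum fun j _ => hyB j ω
      _ = n * M ^ 2 := by simp [mul_comm]
  -- total second moment
  set m := ∑ j, ∫ ω, (x j ω) ^ 2 ∂μ with hm
  have hm0 : 0 ≤ m := Finset.sum_nonneg fun j _ => integral_nonneg (hy0 j)
  have hmP : m ≤ P := by
    calc m ≤ ∑ _j : Fin n, (N:ℝ) ^ (-1 + α * ε) :=
          Finset.sum_le_sum fun j _ => hxvar j
      _ = n * (N:ℝ) ^ (-1 + α * ε) := by simp [mul_comm]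
      _ ≤ N * (N:ℝ) ^ (-1 + α * ε) :=
          mul_le_mul_of_nonneg_right hnN' (Real.rpow_nonneg hN0.le _)
      _ = P := by
          rw [hP]
          nth_rewrite 1 [← Real.rpow_one (N:ℝ)]
          rw [← Real.rpow_add hN0]
          congr 1
          ring
  -- moment bound
  have hmom := moment_pow_bound μ (fun j ω => (x j ω) ^ 2) hymeas hyindep
    (show (0:ℝ) ≤ M ^ 2 by positivity) hy0 hyB k 1 zero_le_one
  -- Jensen
  have hY1 : ∀ ω, 1 ≤ (S ω + 1) ^ k := fun ω =>
    one_le_pow₀ (by linarith [hS0 ω])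
  have hYK : ∀ ω, (S ω + 1) ^ k ≤ (n * M ^ 2 + 1) ^ k := fun ω =>
    pow_le_pow_left₀ (by linarith [hS0 ω]) (by linarith [hSB ω]) k
  have hjen := jensen_rpow μ (Y := fun ω => (S ω + 1) ^ k) (by fun_prop) hY1 hYK hθ0 hθ1
  -- step 0 : LHS ≤ ∫ ((S+1)^k)^θ
  have hnM0 : (0:ℝ) ≤ n * M ^ 2 := by positivity
  have int1 : Integrable (fun ω => (S ω) ^ (q / 2)) μ := by
    refine integrable_of_bdd
      ((Real.continuous_rpow_const (by linarith : (0:ℝ) ≤ q / 2)).measurable.comp hSmeas)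
      (K := (n * M ^ 2) ^ (q / 2)) fun ω => ?_
    rw [abs_of_nonneg (Real.rpow_nonneg (hS0 ω) _)]
    exact Real.rpow_le_rpow (hS0 ω) (hSB ω) (by linarith)
  have int2 : Integrable (fun ω => (((S ω + 1) ^ k : ℝ)) ^ θ) μ := by
    refine integrable_of_bdd
      ((Real.continuous_rpow_const hθ0.le).measurable.comp (by fun_prop))
      (K := ((n * M ^ 2 + 1) ^ k : ℝ) ^ θ) fun ω => ?_
    rw [abs_of_nonneg (Real.rpow_nonneg (by positivity) _)]
    exact Real.rpow_le_rpow (by positivity) (hYK ω) hθ0.le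
  have step0 : ∫ ω, (S ω) ^ (q / 2) ∂μ ≤ ∫ ω, (((S ω + 1) ^ k : ℝ)) ^ θ ∂μ := by
    refine integral_mono int1 int2 fun ω => ?_
    have h1 : (S ω) ^ (q / 2) ≤ (S ω + 1) ^ (q / 2) :=
      Real.rpow_le_rpow (hS0 ω) (by linarith) (by linarith)
    have h2 : (S ω + 1) ^ (q / 2) = (((S ω + 1) ^ k : ℝ)) ^ θ := by
      rw [← hkθ, Real.rpow_mul (by linarith [hS0 ω]), Real.rpow_natCast]
    rw [← h2]; exact h1
  -- step 1 : Jensen + moment bound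
  set D := m + 1 + (k : ℝ) * M ^ 2 with hD
  have hD1 : 1 ≤ D := by
    have : (0:ℝ) ≤ (k:ℝ) * M ^ 2 := by positivity
    rw [hD]; linarith
  have step1 : ∫ ω, (((S ω + 1) ^ k : ℝ)) ^ θ ∂μ ≤ D ^ (q / 2) := by
    refine le_trans hjen ?_
    have hint0 : 0 ≤ ∫ ω, ((S ω + 1) ^ k : ℝ) ∂μ :=
      integral_nonneg fun ω => by positivity
    have hDk : (∫ ω, ((S ω + 1) ^ k : ℝ) ∂μ) ≤ D ^ k := by
      refine le_trans (le_of_eq ?_) hmom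
      rfl
    calc (∫ ω, ((S ω + 1) ^ k : ℝ) ∂μ) ^ θ ≤ (D ^ k : ℝ) ^ θ :=
          Real.rpow_le_rpow hint0 hDk hθ0.le
      _ = D ^ (q / 2) := by
          rw [← Real.rpow_natCast D k, ← Real.rpow_mul (by linarith), hkθ]
  -- arithmetic
  have hDle : D ≤ (M ^ 2 + 2) * (P + q) := by
    have h1 : (k:ℝ) * M ^ 2 ≤ q * M ^ 2 :=
      mul_le_mul_of_nonneg_right hkq (by positivity)
    nlinarith [sq_nonneg M]
  have harith : D ^ (q / 2) ≤ C ^ q * (P ^ (q / 2) + q ^ (q / 2) * N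
      + q ^ (q / 4) * P ^ (q / 4)) := by
    have hPq0 : (0:ℝ) ≤ P + q := by linarith
    calc D ^ (q / 2) ≤ ((M ^ 2 + 2) * (P + q)) ^ (q / 2) :=
          Real.rpow_le_rpow (by linarith) hDle (by linarith)
      _ = (M ^ 2 + 2) ^ (q / 2) * (P + q) ^ (q / 2) :=
          Real.mul_rpow (by positivity) hPq0
      _ ≤ (M ^ 2 + 2) ^ (q / 2) * (2 ^ (q / 2) * (P ^ (q / 2) + q ^ (q / 2))) := by
          refine mul_le_mul_of_nonneg_left
            (add_rpow_le hP0.le hq0.le (by linarith)) (Real.rpow_nonneg (by positivity) _)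
      _ = C ^ (q / 2) * (P ^ (q / 2) + q ^ (q / 2)) := by
          have e2 : (M ^ 2 + 2) * 2 = C := by rw [hC]; ring
          rw [← mul_assoc, ← Real.mul_rpow (by positivity) (by norm_num), e2]
      _ ≤ C ^ q * (P ^ (q / 2) + q ^ (q / 2) * N + q ^ (q / 4) * P ^ (q / 4)) := by
          have hCq : C ^ (q / 2) ≤ C ^ q :=
            Real.rpow_le_rpow_of_exponent_le hC1 (by linarith)
          have hqN : q ^ (q / 2) ≤ q ^ (q / 2) * N := by
            nth_rewrite 1 [← mul_one (q ^ (q / 2))]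
            exact mul_le_mul_of_nonneg_left hN1 (Real.rpow_nonneg hq0.le _)
          have h3 : (0:ℝ) ≤ q ^ (q / 4) * P ^ (q / 4) :=
            mul_nonneg (Real.rpow_nonneg hq0.le _) (Real.rpow_nonneg hP0.le _)
          have hsum0 : (0:ℝ) ≤ P ^ (q / 2) + q ^ (q / 2) :=
            add_nonneg (Real.rpow_nonneg hP0.le _) (Real.rpow_nonneg hq0.le _)
          calc C ^ (q / 2) * (P ^ (q / 2) + q ^ (q / 2))
              ≤ C ^ q * (P ^ (q / 2) + q ^ (q / 2)) :=
                mul_le_mul_of_nonneg_right hCq hsum0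
            _ ≤ C ^ q * (P ^ (q / 2) + q ^ (q / 2) * N + q ^ (q / 4) * P ^ (q / 4)) := by
                refine mul_le_mul_of_nonneg_left ?_ (Real.rpow_nonneg (by positivity) _)
                linarith
  exact le_trans step0 (le_trans step1 harith)
end
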